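/- Let π0, π1 : [0,1] → [0,1] be a proper binarized scoring rule and let p ∈ (0,1). Then the difference quotient r ↦ (π0(p) − π0(r)) / (π1(r) − π1(p)) converges to p/(1−p) as r tends to p within [0,1] \ {p}; in particular both the left limit (r ↑ p) and the right limit (r ↓ p) equal p/(1−p). -/

import Mathlib

open Filter Topology

theorem proper_ratio_limit
    (pi0 pi1 : ℝ → ℝ)
    (hpi0 : ∀ r ∈ Set.Icc (0:ℝ) 1, pi0 r ∈ Set.Icc (0:ℝ) 1)
    (hpi1 : ∀ r ∈ Set.Icc (0:ℝ) 1, pi1 r ∈ Set.Icc (0:ℝ) 1)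
    (hproper : ∀ q ∈ Set.Icc (0:ℝ) 1, ∀ r ∈ Set.Icc (0:ℝ) 1, r ≠ q →
      (1 - q) * pi0 r + q * pi1 r < (1 - q) * pi0 q + q * pi1 q)
    (p : ℝ) (hp : p ∈ Set.Ioo (0:ℝ) 1)
    : Tendsto (fun r => (pi0 p - pi0 r) / (pi1 r - pi1 p))
        (𝓝[Set.Icc (0:ℝ) 1 \ {p}] p) (𝓝 (p / (1 - p))) ∧
      Tendsto (fun r => (pi0 p - pi0 r) / (pi1 r - pi1 p))
        (𝓝[Set.Ico (0:ℝ) p] p) (𝓝 (p / (1 - p))) ∧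
      Tendsto (fun r => (pi0 p - pi0 r) / (pi1 r - pi1 p))
        (𝓝[Set.Ioc p 1] p) (𝓝 (p / (1 - p))) := by
  obtain ⟨hp0, hp1⟩ := hp
  have hpI : p ∈ Set.Icc (0:ℝ) 1 := ⟨hp0.le, hp1.le⟩
  set L : ℝ := p / (1 - p) with hL
  set f : ℝ → ℝ := fun r => (pi0 p - pi0 r) / (pi1 r - pi1 p) with hf
  set g : ℝ → ℝ := fun r => r / (1 - r) with hg
  -- key pointwise estimate
  have key : ∀ r ∈ Set.Icc (0:ℝ) 1, r ≠ p → r < 1 → dist (f r) L ≤ dist (g r) L := by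
    intro r hr hrp hr1
    have h1 := hproper p hpI r hr hrp
    have h2 := hproper r hr p hpI (fun h => hrp h.symm)
    set A : ℝ := pi0 p - pi0 r with hA
    set B : ℝ := pi1 r - pi1 p with hB
    have hAB1 : p * B < (1 - p) * A := by simp only [hA, hB]; nlinarith
    have hAB2 : (1 - r) * A < r * B := by simp only [hA, hB]; nlinarith
    have h1p : (0:ℝ) < 1 - p := by linarith
    have h1r : (0:ℝ) < 1 - r := by linarith
    have hfr : f r = A / B := rfl
    have hgr : g r = r / (1 - r) := rfl
    rcases lt_trichotomy B 0 with hBneg | hB0 | hBpos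
    · -- B < 0, then A < 0
      have hrB : r * B ≤ 0 := mul_nonpos_of_nonneg_of_nonpos hr.1 hBneg.le
      have hAneg : A < 0 := by nlinarith
      have hABeq : A / B = (-A) / (-B) := by rw [neg_div_neg_eq]
      have hnB : (0:ℝ) < -B := by linarith
      have hlow : r / (1 - r) < A / B := by
        rw [hABeq, div_lt_div_iff₀ h1r hnB]
        nlinarith
      have hup : A / B < L := by
        rw [hABeq, hL, div_lt_div_iff₀ hnB h1p]
        nlinarith
      rw [hfr, hgr, Real.dist_eq, Real.dist_eq, abs_of_nonpos (by linarith),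
        abs_of_nonpos (by linarith)]
      linarith
    · -- B = 0 impossible
      exfalso
      have hApos : 0 < A := by nlinarith
      nlinarith
    · -- B > 0, then A > 0
      have hlow : L < A / B := by
        rw [hL, div_lt_div_iff₀ h1p hBpos]
        nlinarith
      have hup : A / B < r / (1 - r) := by
        rw [div_lt_div_iff₀ hBpos h1r]
        nlinarith
      rw [hfr, hgr, Real.dist_eq, Real.dist_eq, abs_of_nonneg (by linarith),
        abs_of_nonneg (by linarith)]
      linarith
  -- g is continuous at p
  have hgt : Tendsto g (𝓝 p) (𝓝 L) := by
    have : ContinuousAt g p := by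
      apply ContinuousAt.div continuousAt_id (continuousAt_const.sub continuousAt_id)
      show (1:ℝ) - p ≠ 0
      intro h; linarith
    simpa [hg, hL] using this.tendsto
  -- main limit on Icc 0 1 \ {p}
  have hmain : Tendsto f (𝓝[Set.Icc (0:ℝ) 1 \ {p}] p) (𝓝 L) := by
    rw [tendsto_iff_dist_tendsto_zero]
    have hmem : ∀ᶠ r in 𝓝[Set.Icc (0:ℝ) 1 \ {p}] p, r ∈ Set.Icc (0:ℝ) 1 \ {p} :=
      eventually_mem_nhdsWithin
    have hlt1 : ∀ᶠ r in 𝓝[Set.Icc (0:ℝ) 1 \ {p}] p, r < 1 :=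
      (eventually_lt_nhds hp1).filter_mono nhdsWithin_le_nhds
    refine squeeze_zero' (g := fun r => dist (g r) L) (Eventually.of_forall fun r => dist_nonneg) ?_ ?_
    · filter_upwards [hmem, hlt1] with r hr hr1
      exact key r hr.1 hr.2 hr1
    · exact tendsto_iff_dist_tendsto_zero.mp (hgt.mono_left nhdsWithin_le_nhds)
  refine ⟨hmain, ?_, ?_⟩
  · refine hmain.mono_left (nhdsWithin_mono p ?_)
    intro r hr
    exact ⟨⟨hr.1, le_of_lt (lt_trans hr.2 hp1)⟩, ne_of_lt hr.2⟩
  · refine hmain.mono_left (nhdsWithin_mono p ?_)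
    intro r hr
    exact ⟨⟨le_of_lt (lt_trans hp0 hr.1), hr.2⟩, ne_of_gt hr.1⟩
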